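/- Let A ∈ ℝ^{d×d} be symmetric positive semidefinite with eigenvalues σ_1 ≥ … ≥ σ_d ≥ 0, let U ∈ ℝ^{d×k} be an orthonormal set of eigenvectors for the largest k eigenvalues, and let X ∈ ℝ^{d×k} have orthonormal columns. If ‖(I − X Xᵀ) U‖ ≤ α, then ‖(I − X Xᵀ) A‖ ≤ σ_{k+1} + α σ_1. -/

import Mathlib

open MeasureTheory ProbabilityTheory

noncomputable def vnorm {n : ℕ} (v : Fin n → ℝ) : ℝ := Real.sqrt (∑ i, v i ^ 2)

noncomputable def vinf {n : ℕ} (v : Fin n → ℝ) : ℝ := ⨆ i, |v i|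

def dotp {n : ℕ} (v w : Fin n → ℝ) : ℝ := ∑ i, v i * w i

/-- Spectral norm (largest singular value) of a real matrix. -/
noncomputable def specNorm {m n : ℕ} (A : Matrix (Fin m) (Fin n) ℝ) : ℝ :=
  sSup {r | ∃ v : Fin n → ℝ, vnorm v = 1 ∧ r = vnorm (A.mulVec v)}

/-- Largest entry in absolute value. -/
noncomputable def entryNorm {m n : ℕ} (A : Matrix (Fin m) (Fin n) ℝ) : ℝ :=
  ⨆ i, ⨆ j, |A i j|

/-- `P` is a `p × p` orthogonal projection matrix of rank `k`. -/
def IsProjOfRank {p : ℕ} (k : ℕ) (P : Matrix (Fin p) (Fin p) ℝ) : Prop :=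
  P.transpose = P ∧ P * P = P ∧ P.rank = k

/-- cos of the k-th principal angle between range U and range X. -/
noncomputable def cosPA {d q p : ℕ} (k : ℕ) (U : Matrix (Fin d) (Fin q) ℝ)
    (X : Matrix (Fin d) (Fin p) ℝ) : ℝ :=
  sSup {r | ∃ P : Matrix (Fin p) (Fin p) ℝ, IsProjOfRank k P ∧
    r = sInf {s | ∃ w : Fin p → ℝ, vnorm w = 1 ∧ P.mulVec w = w ∧
      s = vnorm ((U.transpose * X).mulVec w) / vnorm (X.mulVec w)}}

/-- tan of the k-th principal angle between range U and range X, where V is an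
orthonormal basis of the orthogonal complement of range U. -/
noncomputable def tanPA {d q q' p : ℕ} (k : ℕ) (U : Matrix (Fin d) (Fin q) ℝ)
    (V : Matrix (Fin d) (Fin q') ℝ) (X : Matrix (Fin d) (Fin p) ℝ) : ℝ :=
  sInf {r | ∃ P : Matrix (Fin p) (Fin p) ℝ, IsProjOfRank k P ∧
    r = sSup {s | ∃ w : Fin p → ℝ, vnorm w = 1 ∧ P.mulVec w = w ∧
      s = vnorm ((V.transpose * X).mulVec w) / vnorm ((U.transpose * X).mulVec w)}}

/-- Column-wise Gram–Schmidt orthonormalization of a matrix. -/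
noncomputable def matGS {d p : ℕ} (Y : Matrix (Fin d) (Fin p) ℝ) : Matrix (Fin d) (Fin p) ℝ :=
  Matrix.of fun i j =>
    (WithLp.equiv 2 (Fin d → ℝ))
      (@InnerProductSpace.gramSchmidtNormed ℝ (EuclideanSpace ℝ (Fin d)) _ _ _ (Fin p) _ _
        (inferInstance : WellFoundedLT (Fin p))
        (fun j' : Fin p => (WithLp.equiv 2 (Fin d → ℝ)).symm fun i' => Y i' j') j) i

/-- The law of a `d × p` random matrix with i.i.d. standard Gaussian entries. -/
noncomputable def stdGaussianMatrix (d p : ℕ) : Measure (Fin d → Fin p → ℝ) :=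
  Measure.pi fun _ => Measure.pi fun _ => gaussianReal 0 1

lemma vnorm_nonneg {n : ℕ} (v : Fin n → ℝ) : 0 ≤ vnorm v := Real.sqrt_nonneg _

lemma vnorm_sq {n : ℕ} (v : Fin n → ℝ) : vnorm v ^ 2 = ∑ i, v i ^ 2 := by
  rw [vnorm, Real.sq_sqrt]; positivity

lemma vnorm_eq_norm {n : ℕ} (v : Fin n → ℝ) :
    vnorm v = ‖(WithLp.equiv 2 (Fin n → ℝ)).symm v‖ := by
  rw [EuclideanSpace.norm_eq, vnorm]
  congr 1
  refine Finset.sum_congr rfl fun i _ => ?_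
  rw [WithLp.equiv_symm_apply, WithLp.ofLp_toLp, Real.norm_eq_abs, sq_abs]

lemma vnorm_add_le {n : ℕ} (v w : Fin n → ℝ) : vnorm (v + w) ≤ vnorm v + vnorm w := by
  rw [vnorm_eq_norm, vnorm_eq_norm, vnorm_eq_norm, WithLp.equiv_symm_apply, WithLp.toLp_add]
  exact norm_add_le _ _

lemma dotp_eq_inner {n : ℕ} (v w : Fin n → ℝ) :
    dotp v w = inner ℝ ((WithLp.equiv 2 (Fin n → ℝ)).symm v) ((WithLp.equiv 2 (Fin n → ℝ)).symm w) := by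
  rw [PiLp.inner_apply, dotp]
  refine Finset.sum_congr rfl fun i _ => ?_
  simp [WithLp.equiv_symm_apply, RCLike.inner_apply, mul_comm]

lemma dotp_le {n : ℕ} (v w : Fin n → ℝ) : dotp v w ≤ vnorm v * vnorm w := by
  rw [dotp_eq_inner, vnorm_eq_norm, vnorm_eq_norm]
  exact real_inner_le_norm _ _

lemma dotp_self {n : ℕ} (v : Fin n → ℝ) : dotp v v = vnorm v ^ 2 := by
  rw [vnorm_sq, dotp]; exact Finset.sum_congr rfl fun i _ => (sq (v i)).symm ▸ (pow_two (v i)).symm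

lemma dotp_comm {n : ℕ} (v w : Fin n → ℝ) : dotp v w = dotp w v :=
  Finset.sum_congr rfl fun i _ => mul_comm _ _

lemma dotp_mulVec {m n : ℕ} (M : Matrix (Fin m) (Fin n) ℝ) (x : Fin m → ℝ) (y : Fin n → ℝ) :
    dotp x (M.mulVec y) = dotp (M.transpose.mulVec x) y := by
  simp only [dotp, Matrix.mulVec, dotProduct, Matrix.transpose_apply, Finset.mul_sum,
    Finset.sum_mul]
  rw [Finset.sum_comm]
  exact Finset.sum_congr rfl fun i _ => Finset.sum_congr rfl fun j _ => by ring

lemma vnorm_eq_sqrt_dotp {n : ℕ} (v : Fin n → ℝ) : vnorm v = Real.sqrt (dotp v v) := by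
  rw [dotp_self, Real.sqrt_sq (vnorm_nonneg v)]

lemma vnorm_eq_of_dotp_eq {n m : ℕ} {v : Fin n → ℝ} {w : Fin m → ℝ}
    (h : dotp v v = dotp w w) : vnorm v = vnorm w := by
  rw [vnorm_eq_sqrt_dotp, vnorm_eq_sqrt_dotp, h]

lemma abs_dotp_le {n : ℕ} (v w : Fin n → ℝ) : |dotp v w| ≤ vnorm v * vnorm w := by
  rcases abs_cases (dotp v w) with ⟨h, _⟩ | ⟨h, _⟩
  · rw [h]; exact dotp_le v w
  · rw [h]
    have : dotp (-v) w ≤ vnorm (-v) * vnorm w := dotp_le _ _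
    have h1 : dotp (-v) w = -dotp v w := by
      simp [dotp, ← Finset.sum_neg_distrib]
    have h2 : vnorm (-v) = vnorm v := by
      simp [vnorm, Pi.neg_apply, neg_sq]
    rw [h1, h2] at this; linarith

lemma vnorm_mulVec_le_frob {m n : ℕ} (A : Matrix (Fin m) (Fin n) ℝ) (v : Fin n → ℝ) :
    vnorm (A.mulVec v) ≤ Real.sqrt (∑ i, ∑ j, A i j ^ 2) * vnorm v := by
  have key : ∑ i, (A.mulVec v) i ^ 2 ≤ (∑ i, ∑ j, A i j ^ 2) * (vnorm v ^ 2) := by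
    rw [Finset.sum_mul]
    refine Finset.sum_le_sum fun i _ => ?_
    have h1 : (A.mulVec v) i = dotp (A i) v := rfl
    have h2 : |dotp (A i) v| ≤ vnorm (A i) * vnorm v := abs_dotp_le _ _
    calc (A.mulVec v) i ^ 2 = |dotp (A i) v| ^ 2 := by rw [h1, sq_abs]
      _ ≤ (vnorm (A i) * vnorm v) ^ 2 := by
          apply pow_le_pow_left₀ (abs_nonneg _) h2
      _ = (∑ j, A i j ^ 2) * vnorm v ^ 2 := by
          rw [mul_pow, vnorm_sq]
  calc vnorm (A.mulVec v) = Real.sqrt (∑ i, (A.mulVec v) i ^ 2) := rfl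
    _ ≤ Real.sqrt ((∑ i, ∑ j, A i j ^ 2) * (vnorm v ^ 2)) := Real.sqrt_le_sqrt key
    _ = Real.sqrt (∑ i, ∑ j, A i j ^ 2) * vnorm v := by
        rw [Real.sqrt_mul (by positivity), Real.sqrt_sq (vnorm_nonneg v)]

lemma specNorm_bddAbove {m n : ℕ} (A : Matrix (Fin m) (Fin n) ℝ) :
    BddAbove {r | ∃ v : Fin n → ℝ, vnorm v = 1 ∧ r = vnorm (A.mulVec v)} := by
  refine ⟨Real.sqrt (∑ i, ∑ j, A i j ^ 2), fun r ⟨v, hv, hr⟩ => ?_⟩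
  rw [hr]
  calc vnorm (A.mulVec v) ≤ Real.sqrt (∑ i, ∑ j, A i j ^ 2) * vnorm v :=
        vnorm_mulVec_le_frob A v
    _ = Real.sqrt (∑ i, ∑ j, A i j ^ 2) := by rw [hv, mul_one]

lemma le_specNorm {m n : ℕ} (A : Matrix (Fin m) (Fin n) ℝ) (v : Fin n → ℝ)
    (hv : vnorm v = 1) : vnorm (A.mulVec v) ≤ specNorm A :=
  le_csSup (specNorm_bddAbove A) ⟨v, hv, rfl⟩

lemma vnorm_single {n : ℕ} (hn : 0 < n) : vnorm (Pi.single (⟨0, hn⟩ : Fin n) (1:ℝ)) = 1 := by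
  have : ∑ i, (Pi.single (⟨0, hn⟩ : Fin n) (1:ℝ)) i ^ 2 = (1:ℝ) := by
    rw [Finset.sum_eq_single_of_mem (⟨0, hn⟩ : Fin n) (Finset.mem_univ _)
      (fun b _ hb => by rw [Pi.single_eq_of_ne hb]; ring)]
    simp
  rw [vnorm, this, Real.sqrt_one]

lemma specNorm_nonneg {m n : ℕ} (hn : 0 < n) (A : Matrix (Fin m) (Fin n) ℝ) :
    0 ≤ specNorm A :=
  le_trans (vnorm_nonneg _) (le_specNorm A _ (vnorm_single hn))

lemma vnorm_smul {n : ℕ} (c : ℝ) (v : Fin n → ℝ) : vnorm (c • v) = |c| * vnorm v := by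
  rw [vnorm_eq_norm, vnorm_eq_norm]
  rw [show (WithLp.equiv 2 (Fin n → ℝ)).symm (c • v) = c • (WithLp.equiv 2 (Fin n → ℝ)).symm v
    from rfl]
  rw [norm_smul, Real.norm_eq_abs]

lemma vnorm_eq_zero {n : ℕ} {v : Fin n → ℝ} (h : vnorm v = 0) : v = 0 := by
  have h2 : ∑ i, v i ^ 2 = 0 := by
    have := vnorm_sq v; rw [h] at this; linarith [this]
  funext i
  have := (Finset.sum_eq_zero_iff_of_nonneg (fun i _ => sq_nonneg (v i))).mp h2 i (Finset.mem_univ i)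
  exact pow_eq_zero_iff (by norm_num) |>.mp this

lemma vnorm_mulVec_le {m n : ℕ} (A : Matrix (Fin m) (Fin n) ℝ) (v : Fin n → ℝ) :
    vnorm (A.mulVec v) ≤ specNorm A * vnorm v := by
  rcases eq_or_lt_of_le (vnorm_nonneg v) with h | h
  · rw [vnorm_eq_zero h.symm, Matrix.mulVec_zero,
      show vnorm (0 : Fin m → ℝ) = 0 by simp [vnorm],
      show vnorm (0 : Fin n → ℝ) = 0 by simp [vnorm], mul_zero]
  · have hv : vnorm ((vnorm v)⁻¹ • v) = 1 := by
      rw [vnorm_smul, abs_of_pos (inv_pos.mpr h), inv_mul_cancel₀ (ne_of_gt h)]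
    have := le_specNorm A _ hv
    rw [Matrix.mulVec_smul, vnorm_smul, abs_of_pos (inv_pos.mpr h)] at this
    calc vnorm (A.mulVec v) = vnorm v * ((vnorm v)⁻¹ * vnorm (A.mulVec v)) := by
          field_simp
      _ ≤ vnorm v * specNorm A := by
          exact mul_le_mul_of_nonneg_left this (le_of_lt h)
      _ = specNorm A * vnorm v := mul_comm _ _

lemma specNorm_le {m n : ℕ} (A : Matrix (Fin m) (Fin n) ℝ) (c : ℝ) (hc : 0 ≤ c)
    (h : ∀ v : Fin n → ℝ, vnorm v = 1 → vnorm (A.mulVec v) ≤ c) : specNorm A ≤ c :=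
  Real.sSup_le (fun _ ⟨v, hv, hr⟩ => hr ▸ h v hv) hc

/-- if `X` nearly captures the top-k invariant subspace `U` of `A`,
then `X` gives a good spectral low-rank approximation of `A`.
Eigenvalues are 1-indexed: `σ j` for `1 ≤ j ≤ d`. -/
theorem stmt13 (d k : ℕ) (hk : 0 < k) (hkd : k < d)
    (A W : Matrix (Fin d) (Fin d) ℝ) (σ : ℕ → ℝ)
    (hW : W.transpose * W = 1)
    (hA : A = W * Matrix.diagonal (fun i : Fin d => σ ((i : ℕ) + 1)) * W.transpose)
    (hσmono : ∀ i j : ℕ, 1 ≤ i → i ≤ j → j ≤ d → σ j ≤ σ i)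
    (hσ0 : ∀ i : ℕ, 1 ≤ i → i ≤ d → 0 ≤ σ i)
    (U : Matrix (Fin d) (Fin k) ℝ)
    (hU : ∀ (i : Fin d) (j : Fin k), U i j = W i (Fin.castLE hkd.le j))
    (X : Matrix (Fin d) (Fin k) ℝ) (hX : X.transpose * X = 1)
    (α : ℝ) (hα : specNorm ((1 - X * X.transpose) * U) ≤ α) :
    specNorm ((1 - X * X.transpose) * A) ≤ σ (k + 1) + α * σ 1 := by
  set M : Matrix (Fin d) (Fin d) ℝ := 1 - X * X.transpose with hM
  have hPP : (X * X.transpose) * (X * X.transpose) = X * X.transpose := by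
    calc (X * X.transpose) * (X * X.transpose)
        = X * ((X.transpose * X) * X.transpose) := by
          rw [Matrix.mul_assoc, Matrix.mul_assoc]
      _ = X * X.transpose := by rw [hX, Matrix.one_mul]
  have hMT : M.transpose = M := by
    rw [hM, Matrix.transpose_sub, Matrix.transpose_one, Matrix.transpose_mul,
      Matrix.transpose_transpose]
  have hMM : M * M = M := by
    rw [hM, sub_mul, one_mul, mul_sub, mul_one, hPP, sub_self, sub_zero]
  have hMcon : ∀ w : Fin d → ℝ, vnorm (M.mulVec w) ≤ vnorm w := by
    intro w
    have h1 : dotp (M.mulVec w) (M.mulVec w) = dotp (M.mulVec w) w := by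
      conv_lhs => rw [dotp_mulVec, hMT, Matrix.mulVec_mulVec, hMM]
    have h2 : dotp (M.mulVec w) w ≤ vnorm (M.mulVec w) * vnorm w := dotp_le _ _
    rw [dotp_self] at h1
    nlinarith [vnorm_nonneg (M.mulVec w), vnorm_nonneg w]
  have hWWT : W * W.transpose = 1 := mul_eq_one_comm.mp hW
  have hWpres : ∀ x : Fin d → ℝ, dotp (W.mulVec x) (W.mulVec x) = dotp x x := by
    intro x
    conv_lhs => rw [dotp_comm, dotp_mulVec, Matrix.mulVec_mulVec, hW, Matrix.one_mulVec]
  have hσk1 : 0 ≤ σ (k+1) := hσ0 (k+1) (by omega) (by omega)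
  have hσ1 : 0 ≤ σ 1 := hσ0 1 le_rfl (by omega)
  have hα0 : 0 ≤ α := le_trans (specNorm_nonneg hk _) hα
  apply specNorm_le _ _ (add_nonneg hσk1 (mul_nonneg hα0 hσ1))
  intro v hv
  set u := W.transpose.mulVec v with hu
  have huu : dotp u u = 1 := by
    rw [hu, dotp_comm, dotp_mulVec, Matrix.transpose_transpose, Matrix.mulVec_mulVec, hWWT,
      Matrix.one_mulVec, dotp_self, hv]; norm_num
  set s : Fin d → ℝ := fun j => σ ((j:ℕ)+1) * u j with hs
  have hDu : (Matrix.diagonal fun i : Fin d => σ ((i:ℕ)+1)).mulVec (W.transpose.mulVec v) = s := by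
    funext j
    rw [Matrix.mulVec_diagonal, hs]
  have hAv : A.mulVec v = W.mulVec s := by
    rw [hA, ← Matrix.mulVec_mulVec, ← Matrix.mulVec_mulVec, hDu]
  set s1 : Fin d → ℝ := fun j => if (j:ℕ) < k then s j else 0 with hs1
  set s2 : Fin d → ℝ := fun j => if (j:ℕ) < k then 0 else s j with hs2
  have hsplit : s = s1 + s2 := by
    funext j; by_cases h : (j:ℕ) < k <;> simp [hs1, hs2, h]
  set t : Fin k → ℝ := fun j => s (Fin.castLE hkd.le j) with ht
  have hWs1 : W.mulVec s1 = U.mulVec t := by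
    funext i
    simp only [Matrix.mulVec, dotProduct]
    have lhs_eq : ∑ j : Fin d, W i j * s1 j
        = ∑ j ∈ Finset.univ.filter (fun j : Fin d => (j:ℕ) < k), W i j * s j := by
      rw [Finset.sum_filter]
      refine Finset.sum_congr rfl fun j _ => ?_
      by_cases h : (j:ℕ) < k <;> simp [hs1, h]
    rw [lhs_eq]
    refine (Finset.sum_nbij' (fun j : Fin k => Fin.castLE hkd.le j)
      (fun j : Fin d => (⟨(j:ℕ) % k, Nat.mod_lt _ hk⟩ : Fin k))
      (fun a _ => Finset.mem_filter.mpr ⟨Finset.mem_univ _, by simpa using a.isLt⟩)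
      (fun a _ => Finset.mem_univ _)
      (fun a _ => by ext; simp [Nat.mod_eq_of_lt a.isLt])
      (fun a ha => by
        have h2 : (a:ℕ) < k := (Finset.mem_filter.mp ha).2
        ext; simp [Nat.mod_eq_of_lt h2])
      (fun a _ => ?_)).symm
    rw [hU, ht]
  have hsum_u : ∑ j : Fin d, u j ^ 2 = 1 := by
    rw [← huu, dotp]; exact Finset.sum_congr rfl fun j _ => (sq (u j))
  have ht_le : vnorm t ≤ σ 1 := by
    have h1 : vnorm t ^ 2 ≤ σ 1 ^ 2 := by
      rw [vnorm_sq]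
      calc ∑ j : Fin k, t j ^ 2
          ≤ ∑ j : Fin k, σ 1 ^ 2 * u (Fin.castLE hkd.le j) ^ 2 := by
            refine Finset.sum_le_sum fun j _ => ?_
            have h0 : (0:ℝ) ≤ σ (((Fin.castLE hkd.le j) : ℕ) + 1) :=
              hσ0 _ (by omega) (by have := (Fin.castLE hkd.le j).isLt; omega)
            have hle : σ (((Fin.castLE hkd.le j) : ℕ) + 1) ≤ σ 1 :=
              hσmono 1 _ le_rfl (by omega) (by have := (Fin.castLE hkd.le j).isLt; omega)
            rw [ht, hs, mul_pow]
            exact mul_le_mul_of_nonneg_right (pow_le_pow_left₀ h0 hle 2) (sq_nonneg _)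
        _ = σ 1 ^ 2 * ∑ j : Fin k, u (Fin.castLE hkd.le j) ^ 2 := (Finset.mul_sum _ _ _).symm
        _ ≤ σ 1 ^ 2 * ∑ j : Fin d, u j ^ 2 := by
            refine mul_le_mul_of_nonneg_left ?_ (sq_nonneg _)
            have hsub := Finset.sum_le_sum_of_subset_of_nonneg
              (Finset.subset_univ (Finset.univ.map (Fin.castLEEmb hkd.le)))
              (fun i _ _ => sq_nonneg (u i))
            rw [Finset.sum_map] at hsub
            simpa using hsub
        _ = σ 1 ^ 2 := by rw [hsum_u, mul_one]
    nlinarith [vnorm_nonneg t]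
  have hs2_le : vnorm s2 ≤ σ (k+1) := by
    have h1 : vnorm s2 ^ 2 ≤ σ (k+1) ^ 2 := by
      rw [vnorm_sq]
      calc ∑ j : Fin d, s2 j ^ 2 ≤ ∑ j : Fin d, σ (k+1) ^ 2 * u j ^ 2 := by
            refine Finset.sum_le_sum fun j _ => ?_
            by_cases h : (j:ℕ) < k
            · have h9 : (0:ℝ) ≤ σ (k+1) ^ 2 * u j ^ 2 := by positivity
              simpa [hs2, h] using h9
            · simp only [hs2, h, if_false]
              have h0 : (0:ℝ) ≤ σ ((j:ℕ) + 1) := hσ0 _ (by omega) (by have := j.isLt; omega)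
              have hle : σ ((j:ℕ) + 1) ≤ σ (k+1) :=
                hσmono (k+1) _ (by omega) (by omega) (by have := j.isLt; omega)
            
              rw [hs, mul_pow]
              exact mul_le_mul_of_nonneg_right (pow_le_pow_left₀ h0 hle 2) (sq_nonneg _)
        _ = σ (k+1) ^ 2 * ∑ j : Fin d, u j ^ 2 := (Finset.mul_sum _ _ _).symm
        _ = σ (k+1) ^ 2 := by rw [hsum_u, mul_one]
    nlinarith [vnorm_nonneg s2]
  have hWs2 : vnorm (W.mulVec s2) = vnorm s2 := vnorm_eq_of_dotp_eq (hWpres s2)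
  calc vnorm ((M * A).mulVec v)
      = vnorm (M.mulVec (W.mulVec s1) + M.mulVec (W.mulVec s2)) := by
        rw [← Matrix.mulVec_mulVec, hAv, hsplit, Matrix.mulVec_add, Matrix.mulVec_add]
    _ ≤ vnorm (M.mulVec (W.mulVec s1)) + vnorm (M.mulVec (W.mulVec s2)) := vnorm_add_le _ _
    _ ≤ α * σ 1 + σ (k+1) := by
        refine add_le_add ?_ ?_
        · rw [hWs1, Matrix.mulVec_mulVec]
          calc vnorm ((M * U).mulVec t) ≤ specNorm (M * U) * vnorm t := vnorm_mulVec_le _ _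
            _ ≤ α * σ 1 := mul_le_mul hα ht_le (vnorm_nonneg t) hα0
        · exact le_trans (hMcon _) (le_of_eq hWs2 |>.trans hs2_le)
    _ = σ (k+1) + α * σ 1 := by ring
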